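/- Let $R>0$, $x_0 \in \mathbb{R}^n$ ($n \geq 3$) with $0<|x_0|<R$, and $0 < \beta \leq (n-2)/(2R)$. Set $\alpha^2 = R^2-|x_0|^2$ and $\varphi(x) = (|x-x_0|^2+\alpha^2)^{-\beta R}$. Then $-\Delta \varphi(x) \geq 0$ for all $x \in \overline{B_R}$, i.e., $\varphi$ is superharmonic on the closed ball. -/

import Mathlib

open Real

/-- The Euclidean Laplacian, as the sum of the second partial derivatives. -/
noncomputable def lap {n : ℕ} (f : EuclideanSpace ℝ (Fin n) → ℝ)
    (x : EuclideanSpace ℝ (Fin n)) : ℝ :=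
  ∑ i : Fin n, fderiv ℝ (fun y => fderiv ℝ f y (EuclideanSpace.single i 1)) x
    (EuclideanSpace.single i 1)

section aux
variable {n : ℕ} (x₀ : EuclideanSpace ℝ (Fin n)) (c γ : ℝ)

lemma aux_hasFDerivAt_u (x : EuclideanSpace ℝ (Fin n)) :
    HasFDerivAt (fun y : EuclideanSpace ℝ (Fin n) => ‖y - x₀‖ ^ 2 + c)
      (2 • (innerSL ℝ (x - x₀))) x := by
  have h := (((hasFDerivAt_id x).sub_const x₀).norm_sq).add_const c
  simpa using h

lemma aux_hasFDerivAt_pow (hc : 0 < c) (x : EuclideanSpace ℝ (Fin n)) :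
    HasFDerivAt (fun y : EuclideanSpace ℝ (Fin n) => (‖y - x₀‖ ^ 2 + c) ^ (-γ))
      ((-γ * (‖x - x₀‖ ^ 2 + c) ^ (-γ - 1)) • (2 • (innerSL ℝ (x - x₀)))) x := by
  have hu : (0:ℝ) < ‖x - x₀‖ ^ 2 + c := by positivity
  have hg := Real.hasDerivAt_rpow_const (x := ‖x - x₀‖ ^ 2 + c) (p := -γ) (Or.inl hu.ne')
  exact hg.comp_hasFDerivAt x (aux_hasFDerivAt_u x₀ c x)

end aux

section aux2
variable {n : ℕ} (x₀ : EuclideanSpace ℝ (Fin n)) (c γ : ℝ)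

lemma aux_fderiv_eq (hc : 0 < c) (i : Fin n) :
    (fun y : EuclideanSpace ℝ (Fin n) =>
        fderiv ℝ (fun z => (‖z - x₀‖ ^ 2 + c) ^ (-γ)) y (EuclideanSpace.single i 1))
      = fun y => (-γ * (‖y - x₀‖ ^ 2 + c) ^ (-γ - 1)) * (2 * (y i - x₀ i)) := by
  funext y
  rw [(aux_hasFDerivAt_pow x₀ c γ hc y).fderiv]
  simp [real_inner_comm, EuclideanSpace.inner_single_left, EuclideanSpace.inner_single_right, mul_comm]

lemma aux_second (hc : 0 < c) (i : Fin n) (x : EuclideanSpace ℝ (Fin n)) :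
    fderiv ℝ (fun y : EuclideanSpace ℝ (Fin n) =>
        (-γ * (‖y - x₀‖ ^ 2 + c) ^ (-γ - 1)) * (2 * (y i - x₀ i))) x
        (EuclideanSpace.single i 1)
      = -2 * γ * (‖x - x₀‖ ^ 2 + c) ^ (-γ - 1)
        + 4 * γ * (γ + 1) * (‖x - x₀‖ ^ 2 + c) ^ (-γ - 2) * (x i - x₀ i) ^ 2 := by
  have e1 : (-γ - 1 : ℝ) = -(γ + 1) := by ring
  have e2 : (-γ - 2 : ℝ) = -(γ + 1) - 1 := by ring
  rw [e1, e2]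
  have hh : HasFDerivAt
      (fun y : EuclideanSpace ℝ (Fin n) => -γ * (‖y - x₀‖ ^ 2 + c) ^ (-(γ + 1)))
      ((-γ) • ((-(γ + 1) * (‖x - x₀‖ ^ 2 + c) ^ (-(γ + 1) - 1)) •
        (2 • (innerSL ℝ (x - x₀))))) x :=
    (aux_hasFDerivAt_pow x₀ c (γ + 1) hc x).const_mul (-γ)
  have hp : HasFDerivAt (fun y : EuclideanSpace ℝ (Fin n) => y i)
      (EuclideanSpace.proj i : EuclideanSpace ℝ (Fin n) →L[ℝ] ℝ) x :=
    (EuclideanSpace.proj i : EuclideanSpace ℝ (Fin n) →L[ℝ] ℝ).hasFDerivAt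
  have hl : HasFDerivAt (fun y : EuclideanSpace ℝ (Fin n) => 2 * (y i - x₀ i))
      ((2 : ℝ) • (EuclideanSpace.proj i : EuclideanSpace ℝ (Fin n) →L[ℝ] ℝ)) x := (hp.sub_const (x₀ i)).const_mul 2
  rw [HasFDerivAt.fderiv (f := fun y : EuclideanSpace ℝ (Fin n) => -γ * (‖y - x₀‖ ^ 2 + c) ^ (-(γ + 1)) * (2 * (y i - x₀ i))) (hh.mul hl)]
  simp [real_inner_comm, EuclideanSpace.inner_single_left, EuclideanSpace.inner_single_right, EuclideanSpace.single_apply]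
  ring

end aux2

lemma aux_norm_sum {n : ℕ} (v : EuclideanSpace ℝ (Fin n)) :
    ∑ i, v i ^ 2 = ‖v‖ ^ 2 := by
  rw [EuclideanSpace.norm_eq, Real.sq_sqrt (by positivity)]
  simp [sq_abs]

lemma aux_lap {n : ℕ} (x₀ : EuclideanSpace ℝ (Fin n)) (c γ : ℝ) (hc : 0 < c)
    (x : EuclideanSpace ℝ (Fin n)) :
    lap (fun y => (‖y - x₀‖ ^ 2 + c) ^ (-γ)) x
      = (n : ℝ) * (-2 * γ * (‖x - x₀‖ ^ 2 + c) ^ (-γ - 1))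
        + 4 * γ * (γ + 1) * (‖x - x₀‖ ^ 2 + c) ^ (-γ - 2) * ‖x - x₀‖ ^ 2 := by
  unfold lap
  have : ∀ i : Fin n,
      fderiv ℝ (fun y => fderiv ℝ (fun z => (‖z - x₀‖ ^ 2 + c) ^ (-γ)) y
        (EuclideanSpace.single i 1)) x (EuclideanSpace.single i 1)
      = -2 * γ * (‖x - x₀‖ ^ 2 + c) ^ (-γ - 1)
        + 4 * γ * (γ + 1) * (‖x - x₀‖ ^ 2 + c) ^ (-γ - 2) * (x i - x₀ i) ^ 2 := by
    intro i
    rw [aux_fderiv_eq x₀ c γ hc i, aux_second x₀ c γ hc i x]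
  rw [Finset.sum_congr rfl (fun i _ => this i)]
  rw [Finset.sum_add_distrib, Finset.sum_const, ← Finset.mul_sum]
  have hv : ∑ i, (x i - x₀ i) ^ 2 = ‖x - x₀‖ ^ 2 := by
    have := aux_norm_sum (x - x₀)
    simpa using this
  rw [hv]
  simp [nsmul_eq_mul]

theorem stmt_3 {n : ℕ} (hn : 3 ≤ n) (R β : ℝ) (hR : 0 < R) (hβ : 0 < β)
    (hβn : β ≤ ((n : ℝ) - 2) / (2 * R))
    (x₀ : EuclideanSpace ℝ (Fin n)) (hx₀ : 0 < ‖x₀‖) (hx₀R : ‖x₀‖ < R)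
    (φ : EuclideanSpace ℝ (Fin n) → ℝ)
    (hφ : ∀ x, φ x = (‖x - x₀‖ ^ 2 + (R ^ 2 - ‖x₀‖ ^ 2)) ^ (-(β * R))) :
    ∀ x ∈ Metric.closedBall (0 : EuclideanSpace ℝ (Fin n)) R, 0 ≤ -lap φ x := by
  intro x _
  obtain rfl : φ = fun y => (‖y - x₀‖ ^ 2 + (R ^ 2 - ‖x₀‖ ^ 2)) ^ (-(β * R)) :=
    funext hφ
  set c : ℝ := R ^ 2 - ‖x₀‖ ^ 2 with hcdef
  set γ : ℝ := β * R with hγdef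
  have hc : 0 < c := by
    have : ‖x₀‖ ^ 2 < R ^ 2 := by nlinarith [norm_nonneg x₀]
    simp only [hcdef]; linarith
  have hγ : 0 < γ := mul_pos hβ hR
  have hγn : γ ≤ ((n : ℝ) - 2) / 2 := by
    calc γ = β * R := rfl
      _ ≤ (((n : ℝ) - 2) / (2 * R)) * R := mul_le_mul_of_nonneg_right hβn hR.le
      _ = ((n : ℝ) - 2) / 2 := by field_simp
  rw [aux_lap x₀ c γ hc x]
  set u : ℝ := ‖x - x₀‖ ^ 2 + c with hudef
  have hu : 0 < u := by positivity
  have hpow : u ^ (-γ - 1) = u ^ (-γ - 2) * u := by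
    rw [show (-γ - 1 : ℝ) = (-γ - 2) + 1 by ring, Real.rpow_add hu, Real.rpow_one]
  have hupos : 0 < u ^ (-γ - 2) := Real.rpow_pos_of_pos hu _
  have hn3 : (3 : ℝ) ≤ (n : ℝ) := by exact_mod_cast hn
  rw [hpow]
  have hr : 0 ≤ ‖x - x₀‖ ^ 2 := sq_nonneg _
  have key : 0 ≤ (2 * (n : ℝ) - 4 * γ - 4) * ‖x - x₀‖ ^ 2 + 2 * (n : ℝ) * c := by
    have h1 : 0 ≤ 2 * (n : ℝ) - 4 * γ - 4 := by linarith
    nlinarith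
  have expand : -((n : ℝ) * (-2 * γ * (u ^ (-γ - 2) * u))
      + 4 * γ * (γ + 1) * u ^ (-γ - 2) * ‖x - x₀‖ ^ 2)
      = γ * u ^ (-γ - 2) * ((2 * (n : ℝ) - 4 * γ - 4) * ‖x - x₀‖ ^ 2 + 2 * (n : ℝ) * c) := by
    simp only [hudef]; ring
  rw [expand]
  positivity
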